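/- For every X ∈ F, underline-f(X) ≥ −n · √(N(X)), where underline-f(X̂) := min{⟨∇f(X̂) | Y − X̂⟩ : Y ∈ F}. -/

import Mathlib

set_option autoImplicit false

open Matrix Set Filter

attribute [local instance] Matrix.normedAddCommGroup Matrix.normedSpace

namespace BoxSDP

open scoped Classical

/-- Trace inner product `⟨A|B⟩ = Trace(Aᵀ B)`. -/
noncomputable def mip {m k : Type*} [Fintype m] [Fintype k]
    (A B : Matrix m k ℝ) : ℝ :=
  (Aᵀ * B).trace

/-- Frobenius norm `‖A‖_F = √⟨A|A⟩`. -/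
noncomputable def fnorm {m k : Type*} [Fintype m] [Fintype k]
    (A : Matrix m k ℝ) : ℝ :=
  Real.sqrt (mip A A)

/-- The feasible set `F = {X : O ⪯ X ⪯ I}` (membership forces symmetry). -/
def Feas (n : ℕ) : Set (Matrix (Fin n) (Fin n) ℝ) :=
  {X | X.PosSemidef ∧ (1 - X).PosSemidef}

/-- Square root of a positive semidefinite matrix (junk value `0` otherwise);
agrees with `A^{1/2} = Q K^{1/2} Qᵀ` on positive semidefinite matrices. -/
noncomputable def psqrt {m : Type*} [Fintype m] [DecidableEq m]
    (A : Matrix m m ℝ) : Matrix m m ℝ :=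
  if h : A.PosSemidef then
    (h.1.eigenvectorUnitary : Matrix m m ℝ) * Matrix.diagonal ((↑) ∘ (√·) ∘ h.1.eigenvalues) *
      (star h.1.eigenvectorUnitary : Matrix m m ℝ)
  else 0

/-- Fourth root `A^{1/4}` of a positive semidefinite matrix. -/
noncomputable def proot4 {m : Type*} [Fintype m] [DecidableEq m]
    (A : Matrix m m ℝ) : Matrix m m ℝ :=
  psqrt (psqrt A)

/-- The 2-norm of a symmetric matrix: its largest absolute eigenvalue. -/
noncomputable def norm2 {m : Type*} [Fintype m] [DecidableEq m]
    (A : Matrix m m ℝ) : ℝ :=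
  if h : A.IsHermitian then sSup (Set.range fun i => |h.eigenvalues i|) else 0

/-- The linear functional `H ↦ ⟨G|H⟩`, as a continuous linear map; a function
`f` has gradient matrix `G` at `X` iff `HasFDerivAt f (gradCLM G) X`. -/
noncomputable def gradCLM {n : ℕ} (G : Matrix (Fin n) (Fin n) ℝ) :
    Matrix (Fin n) (Fin n) ℝ →L[ℝ] ℝ :=
  LinearMap.toContinuousLinearMap
    { toFun := fun H => mip G H
      map_add' := fun x y => by
        simp [mip, Matrix.mul_add]
      map_smul' := fun c x => by
        simp [mip, Matrix.mul_smul] }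

/-- The Hessian bilinear form `⟨A | ∇²f(X) | B⟩` induced by the derivative
`hessOp` of the gradient map. -/
noncomputable def hform {n : ℕ}
    (hessOp : Matrix (Fin n) (Fin n) ℝ →L[ℝ] Matrix (Fin n) (Fin n) ℝ)
    (A B : Matrix (Fin n) (Fin n) ℝ) : ℝ :=
  mip A (hessOp B)

/-- `underline-f`: the minimum of `⟨G | Y − X̂⟩` over `Y ∈ F`. -/
noncomputable def underf {n : ℕ} (G Xh : Matrix (Fin n) (Fin n) ℝ) : ℝ :=
  sInf ((fun Y => mip G (Y - Xh)) '' Feas n)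

/-- First-order optimality condition at `Xs` for gradient matrix `G`. -/
def FirstOrderOpt {n : ℕ} (G Xs : Matrix (Fin n) (Fin n) ℝ) : Prop :=
  ∀ X ∈ Feas n, 0 ≤ mip G (X - Xs)

/-- A fixed eigenvalue decomposition `G = P Γ Pᵀ` of a symmetric matrix `G`,
with eigenvalues in descending order, split into the block `Pp, gp` of
positive eigenvalues and the block `Pm, gm` of nonpositive eigenvalues. -/
structure SpecDecomp (n : ℕ) (G : Matrix (Fin n) (Fin n) ℝ) where
  np : ℕ
  nm : ℕ
  hdim : np + nm = n
  Pp : Matrix (Fin n) (Fin np) ℝ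
  Pm : Matrix (Fin n) (Fin nm) ℝ
  gp : Fin np → ℝ
  gm : Fin nm → ℝ
  hgp_pos : ∀ i, 0 < gp i
  hgm_nonpos : ∀ j, gm j ≤ 0
  hgp_anti : ∀ i j : Fin np, i ≤ j → gp j ≤ gp i
  hgm_anti : ∀ i j : Fin nm, i ≤ j → gm j ≤ gm i
  hPp_orth : Ppᵀ * Pp = 1
  hPm_orth : Pmᵀ * Pm = 1
  hPpPm : Ppᵀ * Pm = 0
  hPPT : Pp * Ppᵀ + Pm * Pmᵀ = 1
  hG : G = Pp * Matrix.diagonal gp * Ppᵀ + Pm * Matrix.diagonal gm * Pmᵀ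

namespace SpecDecomp

variable {n : ℕ} {G : Matrix (Fin n) (Fin n) ℝ}

/-- `V₊(X) = P₊ᵀ X P₊`. -/
def Vp (sd : SpecDecomp n G) (X : Matrix (Fin n) (Fin n) ℝ) :
    Matrix (Fin sd.np) (Fin sd.np) ℝ :=
  sd.Ppᵀ * X * sd.Pp

/-- `V₋(X) = P₋ᵀ (I − X) P₋`. -/
def Vm (sd : SpecDecomp n G) (X : Matrix (Fin n) (Fin n) ℝ) :
    Matrix (Fin sd.nm) (Fin sd.nm) ℝ :=
  sd.Pmᵀ * (1 - X) * sd.Pm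

/-- The search direction `D(X) = P M Pᵀ` with blocks
`M₁₁ = V₊^{1/2} Γ₊ V₊^{1/2}`, `M₁₂ = γ_max P₊ᵀ X P₋`,
`M₂₁ = γ_max P₋ᵀ X P₊`, `M₂₂ = V₋^{1/2} Γ₋ V₋^{1/2}`. -/
noncomputable def Dmat (sd : SpecDecomp n G) (X : Matrix (Fin n) (Fin n) ℝ) :
    Matrix (Fin n) (Fin n) ℝ :=
  sd.Pp * (psqrt (sd.Vp X) * Matrix.diagonal sd.gp * psqrt (sd.Vp X)) * sd.Ppᵀ
    + norm2 G • (sd.Pp * (sd.Ppᵀ * X * sd.Pm) * sd.Pmᵀ)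
    + norm2 G • (sd.Pm * (sd.Pmᵀ * X * sd.Pp) * sd.Ppᵀ)
    + sd.Pm * (psqrt (sd.Vm X) * Matrix.diagonal sd.gm * psqrt (sd.Vm X)) * sd.Pmᵀ

/-- `N(X) = ⟨G | D(X)⟩`. -/
noncomputable def Nval (sd : SpecDecomp n G) (X : Matrix (Fin n) (Fin n) ℝ) : ℝ :=
  mip G (sd.Dmat X)

end SpecDecomp


section Helpers

lemma psqrt_posSemidef {m : Type*} [Fintype m] [DecidableEq m]
    {A : Matrix m m ℝ} (h : A.PosSemidef) : (psqrt A).PosSemidef := by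
  rw [psqrt, dif_pos h]
  have hD : (Matrix.diagonal ((↑) ∘ (√·) ∘ h.1.eigenvalues) : Matrix m m ℝ).PosSemidef := by
    rw [Matrix.posSemidef_diagonal_iff]
    intro i; simp [Real.sqrt_nonneg]
  have := hD.mul_mul_conjTranspose_same (h.1.eigenvectorUnitary : Matrix m m ℝ)
  simpa [Matrix.star_eq_conjTranspose] using this

lemma psqrt_mul_self {m : Type*} [Fintype m] [DecidableEq m]
    {A : Matrix m m ℝ} (h : A.PosSemidef) : psqrt A * psqrt A = A := by
  rw [psqrt, dif_pos h]
  have hU : (star h.1.eigenvectorUnitary : Matrix m m ℝ) * (h.1.eigenvectorUnitary : Matrix m m ℝ) = 1 :=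
    Unitary.coe_star_mul_self _
  have e : ∀ (U D S : Matrix m m ℝ), U * D * S * (U * D * S) = U * (D * (S * U) * D) * S := by
    intro U D S; simp only [Matrix.mul_assoc]
  rw [e, hU, Matrix.mul_one, Matrix.diagonal_mul_diagonal]
  conv_rhs => rw [h.1.spectral_theorem]
  rw [Unitary.conjStarAlgAut_apply]
  congr 3
  funext i
  simp [Real.mul_self_sqrt (h.eigenvalues_nonneg i)]

lemma psqrt_transpose {m : Type*} [Fintype m] [DecidableEq m]
    {A : Matrix m m ℝ} (h : A.PosSemidef) : (psqrt A)ᵀ = psqrt A := by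
  have := (psqrt_posSemidef h).1
  rwa [Matrix.IsHermitian, Matrix.conjTranspose_eq_transpose_of_trivial] at this

lemma tr4 {k : ℕ} (A B C D : Matrix (Fin k) (Fin k) ℝ) :
    (A * (B * (C * D))).trace = (B * (C * (D * A))).trace := by
  rw [Matrix.trace_mul_comm A (B * (C * D))]; simp only [Matrix.mul_assoc]

lemma trace_gV_eq {k : ℕ} {V : Matrix (Fin k) (Fin k) ℝ} (hV : V.PosSemidef)
    (g : Fin k → ℝ) :
    (Matrix.diagonal g * V).trace
      = mip (psqrt (psqrt V) * Matrix.diagonal g * psqrt (psqrt V)) (psqrt V) := by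
  have hS := psqrt_posSemidef hV
  have h44 : psqrt (psqrt V) * psqrt (psqrt V) = psqrt V := psqrt_mul_self hS
  have hSS : psqrt V * psqrt V = V := psqrt_mul_self hV
  set S4 := psqrt (psqrt V) with hS4def
  set S := psqrt V with hSdef
  have hAt : (S4 * Matrix.diagonal g * S4)ᵀ = S4 * Matrix.diagonal g * S4 := by
    rw [Matrix.transpose_mul, Matrix.transpose_mul, Matrix.diagonal_transpose,
      psqrt_transpose hS]
    simp only [Matrix.mul_assoc, hS4def]
  have hV4 : S4 * (S * S4) = V := by
    rw [← hSS, ← h44]; simp only [Matrix.mul_assoc]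
  rw [mip, hAt]
  have h1 : (S4 * Matrix.diagonal g * S4 * S).trace
      = (S4 * (Matrix.diagonal g * (S4 * S))).trace := by
    simp only [Matrix.mul_assoc]
  rw [h1, tr4, hV4]

lemma trace_gSgS_eq {k : ℕ} {V : Matrix (Fin k) (Fin k) ℝ} (hV : V.PosSemidef)
    (g : Fin k → ℝ) :
    (Matrix.diagonal g * (psqrt V * Matrix.diagonal g * psqrt V)).trace
      = mip (psqrt (psqrt V) * Matrix.diagonal g * psqrt (psqrt V))
            (psqrt (psqrt V) * Matrix.diagonal g * psqrt (psqrt V)) := by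
  have hS := psqrt_posSemidef hV
  have h44 : psqrt (psqrt V) * psqrt (psqrt V) = psqrt V := psqrt_mul_self hS
  set S4 := psqrt (psqrt V) with hS4def
  set S := psqrt V with hSdef
  have hAt : (S4 * Matrix.diagonal g * S4)ᵀ = S4 * Matrix.diagonal g * S4 := by
    rw [Matrix.transpose_mul, Matrix.transpose_mul, Matrix.diagonal_transpose,
      psqrt_transpose hS]
    simp only [Matrix.mul_assoc, hS4def]
  rw [mip, hAt]
  have h1 : S4 * Matrix.diagonal g * S4 * (S4 * Matrix.diagonal g * S4)
      = S4 * (Matrix.diagonal g * (S4 * (S4 * (Matrix.diagonal g * S4)))) := by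
    simp only [Matrix.mul_assoc]
  rw [h1, tr4]
  congr 1
  rw [← h44]
  simp only [Matrix.mul_assoc]

lemma mip_eq_sum {m k : Type*} [Fintype m] [Fintype k] (A B : Matrix m k ℝ) :
    mip A B = ∑ p : m × k, A p.1 p.2 * B p.1 p.2 := by
  rw [mip, Matrix.trace]
  rw [Fintype.sum_prod_type_right]
  simp [Matrix.mul_apply, Matrix.diag]

lemma mip_self_nonneg {m k : Type*} [Fintype m] [Fintype k] (A : Matrix m k ℝ) :
    0 ≤ mip A A := by
  rw [mip_eq_sum]
  exact Finset.sum_nonneg fun p _ => mul_self_nonneg _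

lemma mip_cauchy {m k : Type*} [Fintype m] [Fintype k] (A B : Matrix m k ℝ) :
    mip A B ≤ Real.sqrt (mip A A) * Real.sqrt (mip B B) := by
  rw [mip_eq_sum, mip_eq_sum, mip_eq_sum]
  simpa [sq] using Real.sum_mul_le_sqrt_mul_sqrt Finset.univ
    (fun p : m × k => A p.1 p.2) (fun p : m × k => B p.1 p.2)

lemma trace_diag_mul {k : ℕ} (g : Fin k → ℝ) (W : Matrix (Fin k) (Fin k) ℝ) :
    (Matrix.diagonal g * W).trace = ∑ i, g i * W i i := by
  simp [Matrix.trace, Matrix.diag, Matrix.mul_apply, Matrix.diagonal]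

lemma psd_diag_nonneg {k : ℕ} {W : Matrix (Fin k) (Fin k) ℝ} (h : W.PosSemidef)
    (i : Fin k) : 0 ≤ W i i := by
  exact h.diag_nonneg

lemma trace_gSgS_nonneg {k : ℕ} {V : Matrix (Fin k) (Fin k) ℝ} (hV : V.PosSemidef)
    (g : Fin k → ℝ) :
    0 ≤ (Matrix.diagonal g * (psqrt V * Matrix.diagonal g * psqrt V)).trace := by
  rw [trace_gSgS_eq hV g]; exact mip_self_nonneg _

lemma psd_conj {n k : ℕ} {X : Matrix (Fin n) (Fin n) ℝ} (h : X.PosSemidef)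
    (B : Matrix (Fin n) (Fin k) ℝ) : (Bᵀ * X * B).PosSemidef := by
  simpa [Matrix.conjTranspose_eq_transpose_of_trivial] using h.conjTranspose_mul_mul_same B

lemma key {k : ℕ} {V : Matrix (Fin k) (Fin k) ℝ} (hV : V.PosSemidef)
    (hV1 : (1 - V).PosSemidef) (g : Fin k → ℝ) :
    (Matrix.diagonal g * V).trace
      ≤ (k : ℝ) *
        Real.sqrt ((Matrix.diagonal g * (psqrt V * Matrix.diagonal g * psqrt V)).trace) := by
  have hS := psqrt_posSemidef hV
  have htrV : mip (psqrt V) (psqrt V) = V.trace := by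
    rw [mip, psqrt_transpose hV, psqrt_mul_self hV]
  have htrVk : V.trace ≤ (k : ℝ) := by
    rw [Matrix.trace]
    calc ∑ i, V.diag i ≤ ∑ _i : Fin k, (1 : ℝ) := by
          apply Finset.sum_le_sum
          intro i _
          have := psd_diag_nonneg hV1 i
          simp only [Matrix.sub_apply, Matrix.one_apply_eq] at this
          simp [Matrix.diag]
          linarith
      _ = (k : ℝ) := by simp
  calc (Matrix.diagonal g * V).trace
      = mip (psqrt (psqrt V) * Matrix.diagonal g * psqrt (psqrt V)) (psqrt V) :=
        trace_gV_eq hV g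
    _ ≤ Real.sqrt (mip (psqrt (psqrt V) * Matrix.diagonal g * psqrt (psqrt V))
          (psqrt (psqrt V) * Matrix.diagonal g * psqrt (psqrt V)))
          * Real.sqrt (mip (psqrt V) (psqrt V)) := mip_cauchy _ _
    _ ≤ Real.sqrt ((Matrix.diagonal g * (psqrt V * Matrix.diagonal g * psqrt V)).trace)
          * (k : ℝ) := by
        rw [← trace_gSgS_eq hV g]
        apply mul_le_mul_of_nonneg_left _ (Real.sqrt_nonneg _)
        rw [htrV]
        calc Real.sqrt V.trace ≤ Real.sqrt ((k : ℝ)) := Real.sqrt_le_sqrt htrVk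
          _ ≤ (k : ℝ) := by
              rcases Nat.eq_zero_or_pos k with h0 | h1
              · simp [h0]
              · have h1' : (1 : ℝ) ≤ (k : ℝ) := by exact_mod_cast h1
                nlinarith [Real.sq_sqrt (le_trans zero_le_one h1'),
                  Real.sqrt_nonneg ((k : ℝ))]
    _ = (k : ℝ) * Real.sqrt _ := mul_comm _ _

lemma cyc {n k : ℕ} (P : Matrix (Fin n) (Fin k) ℝ) (D : Matrix (Fin k) (Fin k) ℝ)
    (Y : Matrix (Fin n) (Fin n) ℝ) :
    (P * D * Pᵀ * Y).trace = (D * (Pᵀ * Y * P)).trace := by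
  rw [show P * D * Pᵀ * Y = P * (D * (Pᵀ * Y)) by simp only [Matrix.mul_assoc]]
  rw [Matrix.trace_mul_comm]
  simp only [Matrix.mul_assoc]

end Helpers

theorem underf_ge_neg_n_sqrt_Nval {n : ℕ}
    (f : Matrix (Fin n) (Fin n) ℝ → ℝ)
    (grad : Matrix (Fin n) (Fin n) ℝ → Matrix (Fin n) (Fin n) ℝ)
    (hgradsym : ∀ X ∈ Feas n, (grad X).IsSymm)
    (hgrad : ∀ X ∈ Feas n, HasFDerivAt f (gradCLM (grad X)) X)
    (X : Matrix (Fin n) (Fin n) ℝ) (hX : X ∈ Feas n)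
    (sd : SpecDecomp n (grad X)) :
    -(n : ℝ) * Real.sqrt (sd.Nval X) ≤ underf (grad X) X := by
  obtain ⟨hXpsd, hX1psd⟩ := hX
  have hmporth : sd.Pmᵀ * sd.Pp = 0 := by
    have := congrArg Matrix.transpose sd.hPpPm
    simpa [Matrix.transpose_mul] using this
  have A1 : ∀ B : Matrix (Fin sd.np) (Fin sd.np) ℝ, sd.Ppᵀ * (sd.Pp * B) = B := by
    intro B; rw [← Matrix.mul_assoc, sd.hPp_orth, Matrix.one_mul]
  have A2 : ∀ B : Matrix (Fin sd.nm) (Fin sd.np) ℝ, sd.Ppᵀ * (sd.Pm * B) = 0 := by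
    intro B; rw [← Matrix.mul_assoc, sd.hPpPm, Matrix.zero_mul]
  have A3 : ∀ B : Matrix (Fin sd.nm) (Fin sd.nm) ℝ, sd.Pmᵀ * (sd.Pm * B) = B := by
    intro B; rw [← Matrix.mul_assoc, sd.hPm_orth, Matrix.one_mul]
  have A4 : ∀ B : Matrix (Fin sd.np) (Fin sd.nm) ℝ, sd.Pmᵀ * (sd.Pp * B) = 0 := by
    intro B; rw [← Matrix.mul_assoc, hmporth, Matrix.zero_mul]
  -- decomposition of mip G Y
  have hGt : (grad X)ᵀ = grad X := by
    conv_lhs => rw [sd.hG]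
    conv_rhs => rw [sd.hG]
    simp [Matrix.transpose_add, Matrix.transpose_mul, Matrix.diagonal_transpose,
      Matrix.mul_assoc]
  have hmipY : ∀ Y : Matrix (Fin n) (Fin n) ℝ, mip (grad X) Y =
      (Matrix.diagonal sd.gp * (sd.Ppᵀ * Y * sd.Pp)).trace
        + (Matrix.diagonal sd.gm * (sd.Pmᵀ * Y * sd.Pm)).trace := by
    intro Y
    rw [mip, hGt]
    conv_lhs => rw [sd.hG]
    rw [Matrix.add_mul, Matrix.trace_add, cyc, cyc]
  -- the diagonal blocks of D(X)
  have hWpD : sd.Ppᵀ * sd.Dmat X * sd.Pp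
      = psqrt (sd.Vp X) * Matrix.diagonal sd.gp * psqrt (sd.Vp X) := by
    simp only [SpecDecomp.Dmat, Matrix.mul_add, Matrix.add_mul, Matrix.mul_smul,
      Matrix.smul_mul, Matrix.mul_assoc, A1, A2, A4, sd.hPp_orth, sd.hPpPm, hmporth,
      Matrix.mul_one, Matrix.mul_zero, Matrix.zero_mul, smul_zero, add_zero, zero_add]
  have hWmD : sd.Pmᵀ * sd.Dmat X * sd.Pm
      = psqrt (sd.Vm X) * Matrix.diagonal sd.gm * psqrt (sd.Vm X) := by
    simp only [SpecDecomp.Dmat, Matrix.mul_add, Matrix.add_mul, Matrix.mul_smul,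
      Matrix.smul_mul, Matrix.mul_assoc, A3, A2, A4, sd.hPm_orth, sd.hPpPm, hmporth,
      Matrix.mul_one, Matrix.mul_zero, Matrix.zero_mul, smul_zero, add_zero, zero_add]
  -- psd facts
  have hVp : (sd.Vp X).PosSemidef := psd_conj hXpsd sd.Pp
  have hVm : (sd.Vm X).PosSemidef := psd_conj hX1psd sd.Pm
  have hVp1eq : (1 : Matrix (Fin sd.np) (Fin sd.np) ℝ) - sd.Vp X
      = sd.Ppᵀ * (1 - X) * sd.Pp := by
    rw [SpecDecomp.Vp, Matrix.mul_sub, Matrix.mul_one, Matrix.sub_mul, sd.hPp_orth]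
  have hVp1 : ((1 : Matrix (Fin sd.np) (Fin sd.np) ℝ) - sd.Vp X).PosSemidef := by
    rw [hVp1eq]; exact psd_conj hX1psd sd.Pp
  have hVm1eq : (1 : Matrix (Fin sd.nm) (Fin sd.nm) ℝ) - sd.Vm X
      = sd.Pmᵀ * X * sd.Pm := by
    rw [SpecDecomp.Vm, Matrix.mul_sub, Matrix.mul_one, Matrix.sub_mul, sd.hPm_orth]
    abel
  have hVm1 : ((1 : Matrix (Fin sd.nm) (Fin sd.nm) ℝ) - sd.Vm X).PosSemidef := by
    rw [hVm1eq]; exact psd_conj hXpsd sd.Pm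
  -- N = Tp + Tm
  set Tp := (Matrix.diagonal sd.gp *
      (psqrt (sd.Vp X) * Matrix.diagonal sd.gp * psqrt (sd.Vp X))).trace with hTp
  set Tm := (Matrix.diagonal sd.gm *
      (psqrt (sd.Vm X) * Matrix.diagonal sd.gm * psqrt (sd.Vm X))).trace with hTm
  have hN : sd.Nval X = Tp + Tm := by
    rw [SpecDecomp.Nval, hmipY, hWpD, hWmD]
  have hTp0 : 0 ≤ Tp := trace_gSgS_nonneg hVp sd.gp
  have hTm0 : 0 ≤ Tm := trace_gSgS_nonneg hVm sd.gm
  have hN0 : 0 ≤ sd.Nval X := by rw [hN]; linarith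
  -- key inequalities
  set c := (Matrix.diagonal sd.gp * sd.Vp X).trace with hc
  set d := (Matrix.diagonal sd.gm * sd.Vm X).trace with hd
  have hkp : c ≤ (sd.np : ℝ) * Real.sqrt Tp := key hVp hVp1 sd.gp
  have hkm : -d ≤ (sd.nm : ℝ) * Real.sqrt Tm := by
    have h := key hVm hVm1 (-sd.gm)
    have hdn : Matrix.diagonal (-sd.gm) = -Matrix.diagonal sd.gm := by
      ext i j
      by_cases hij : i = j <;> simp [Matrix.diagonal, hij]
    rw [hdn] at h
    simp only [Matrix.neg_mul, Matrix.mul_neg, neg_neg, Matrix.trace_neg] at h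
    exact h
  have hsTp : Real.sqrt Tp ≤ Real.sqrt (sd.Nval X) := by
    apply Real.sqrt_le_sqrt; rw [hN]; linarith
  have hsTm : Real.sqrt Tm ≤ Real.sqrt (sd.Nval X) := by
    apply Real.sqrt_le_sqrt; rw [hN]; linarith
  have hcd : c - d ≤ (n : ℝ) * Real.sqrt (sd.Nval X) := by
    have h1 : (sd.np : ℝ) * Real.sqrt Tp ≤ (sd.np : ℝ) * Real.sqrt (sd.Nval X) :=
      mul_le_mul_of_nonneg_left hsTp (Nat.cast_nonneg _)
    have h2 : (sd.nm : ℝ) * Real.sqrt Tm ≤ (sd.nm : ℝ) * Real.sqrt (sd.Nval X) :=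
      mul_le_mul_of_nonneg_left hsTm (Nat.cast_nonneg _)
    have hdim : (sd.np : ℝ) + (sd.nm : ℝ) = (n : ℝ) := by
      rw [← Nat.cast_add, sd.hdim]
    have h3 : ((sd.np : ℝ) + (sd.nm : ℝ)) * Real.sqrt (sd.Nval X)
        = (n : ℝ) * Real.sqrt (sd.Nval X) := by rw [hdim]
    nlinarith
  -- value of mip (grad X) X
  have hGX : mip (grad X) X = c + ((∑ j, sd.gm j) - d) := by
    rw [hmipY]
    have h2 : sd.Pmᵀ * X * sd.Pm
        = 1 - sd.Vm X := hVm1eq.symm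
    rw [h2, Matrix.mul_sub, Matrix.mul_one, Matrix.trace_sub, Matrix.trace_diagonal]
    rfl
  -- lower bound on mip (grad X) Y for feasible Y
  have hGYlow : ∀ Y, Y ∈ Feas n → (∑ j, sd.gm j) ≤ mip (grad X) Y := by
    intro Y hY
    rw [hmipY]
    have h1 : 0 ≤ (Matrix.diagonal sd.gp * (sd.Ppᵀ * Y * sd.Pp)).trace := by
      rw [trace_diag_mul]
      exact Finset.sum_nonneg fun i _ => mul_nonneg (le_of_lt (sd.hgp_pos i))
        (psd_diag_nonneg (psd_conj hY.1 sd.Pp) i)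
    have h2 : (∑ j, sd.gm j) ≤ (Matrix.diagonal sd.gm * (sd.Pmᵀ * Y * sd.Pm)).trace := by
      rw [trace_diag_mul]
      apply Finset.sum_le_sum
      intro j _
      have hYw : sd.Pmᵀ * (1 - Y) * sd.Pm = 1 - sd.Pmᵀ * Y * sd.Pm := by
        rw [Matrix.mul_sub, Matrix.mul_one, Matrix.sub_mul, sd.hPm_orth]
      have h0 := psd_diag_nonneg (psd_conj hY.2 sd.Pm) j
      rw [hYw] at h0
      simp only [Matrix.sub_apply, Matrix.one_apply_eq] at h0
      nlinarith [sd.hgm_nonpos j]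
    linarith
  -- conclude
  rw [underf]
  have hXF : X ∈ Feas n := ⟨hXpsd, hX1psd⟩
  have hne : ((fun Y => mip (grad X) (Y - X)) '' Feas n).Nonempty :=
    ⟨mip (grad X) (X - X), X, hXF, rfl⟩
  apply le_csInf hne
  rintro b ⟨Y, hY, rfl⟩
  show -(n : ℝ) * Real.sqrt (sd.Nval X) ≤ mip (grad X) (Y - X)
  have hsplit : mip (grad X) (Y - X) = mip (grad X) Y - mip (grad X) X := by
    rw [mip, Matrix.mul_sub, Matrix.trace_sub]; rfl
  rw [hsplit, hGX]
  have := hGYlow Y hY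
  nlinarith

end BoxSDP
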